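/- Define F(x,y,z) = ((1+z)^{1+y}(1-z)^{1-y})/((1+x)^{1+y}(1-x)^{1-y}) and, for -1 < ρ₁ < ρ₂ < 1 and a ∈ (-1,1), let M(a) = sup_{ρ₁<ρ<ρ₂} F(ρ,a,ρ₁) and m(a) = inf_{ρ₁<ρ<ρ₂} F(ρ,a,ρ₁). Let a₀ ∈ (ρ₁,ρ₂) be the unique point with F(ρ₂,a₀,ρ₁) = 1. Then the function a ↦ M(a)/m(a) on (-1,1) is strictly decreasing on (-1,a₀), strictly increasing on (a₀,1), and attains a unique global minimum at a = a₀. -/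

import Mathlib

open Real

/-- `F(x,y,z) = ((1+z)^{1+y}(1-z)^{1-y}) / ((1+x)^{1+y}(1-x)^{1-y})`, real powers. -/
noncomputable def F (x y z : ℝ) : ℝ :=
  ((1 + z) ^ (1 + y) * (1 - z) ^ (1 - y)) / ((1 + x) ^ (1 + y) * (1 - x) ^ (1 - y))

/-- `M(a) = sup_{ρ₁<ρ<ρ₂} F(ρ,a,ρ₁)`. -/
noncomputable def Msup (ρ₁ ρ₂ a : ℝ) : ℝ := sSup ((fun ρ => F ρ a ρ₁) '' Set.Ioo ρ₁ ρ₂)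

/-- `m(a) = inf_{ρ₁<ρ<ρ₂} F(ρ,a,ρ₁)`. -/
noncomputable def minf (ρ₁ ρ₂ a : ℝ) : ℝ := sInf ((fun ρ => F ρ a ρ₁) '' Set.Ioo ρ₁ ρ₂)

open Set

namespace RatioAux

noncomputable def gg (y t : ℝ) : ℝ := (1 + y) * Real.log (1 + t) + (1 - y) * Real.log (1 - t)

lemma F_eq {x z : ℝ} (hx1 : -1 < x) (hx2 : x < 1) (hz1 : -1 < z) (hz2 : z < 1) (y : ℝ) :
    F x y z = Real.exp (gg y z - gg y x) := by
  have hx1' : (0:ℝ) < 1 + x := by linarith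
  have hx2' : (0:ℝ) < 1 - x := by linarith
  have hz1' : (0:ℝ) < 1 + z := by linarith
  have hz2' : (0:ℝ) < 1 - z := by linarith
  rw [F, gg, gg, Real.rpow_def_of_pos hz1', Real.rpow_def_of_pos hz2',
      Real.rpow_def_of_pos hx1', Real.rpow_def_of_pos hx2', ← Real.exp_add, ← Real.exp_add,
      ← Real.exp_sub]
  congr 1
  ring

lemma hasDerivAt_log1p {t : ℝ} (h : -1 < t) :
    HasDerivAt (fun t : ℝ => Real.log (1 + t)) (1 / (1 + t)) t := by
  have h' : (1:ℝ) + t ≠ 0 := by linarith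
  simpa using ((hasDerivAt_id t).const_add 1).log h'

lemma hasDerivAt_log1m {t : ℝ} (h : t < 1) :
    HasDerivAt (fun t : ℝ => Real.log (1 - t)) (-(1 / (1 - t))) t := by
  have h' : (1:ℝ) - t ≠ 0 := by linarith
  simpa [neg_div] using ((hasDerivAt_id t).const_sub 1).log h'

lemma hasDerivAt_gg (a : ℝ) {t : ℝ} (h1 : -1 < t) (h2 : t < 1) :
    HasDerivAt (gg a) (2 * (a - t) / ((1 + t) * (1 - t))) t := by
  have h1' : (1:ℝ) + t ≠ 0 := by linarith
  have h2' : (1:ℝ) - t ≠ 0 := by linarith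
  have hd := ((hasDerivAt_log1p h1).const_mul (1 + a)).add
    ((hasDerivAt_log1m h2).const_mul (1 - a))
  have : HasDerivAt (fun t : ℝ => (1 + a) * Real.log (1 + t) + (1 - a) * Real.log (1 - t))
      (2 * (a - t) / ((1 + t) * (1 - t))) t := by
    refine hd.congr_deriv ?_
    field_simp
    ring
  exact this

lemma gg_mono (a : ℝ) {s t : ℝ} (hs : -1 < s) (ht : t < 1) (hta : t ≤ a) :
    MonotoneOn (gg a) (Icc s t) := by
  apply monotoneOn_of_deriv_nonneg (convex_Icc s t)
  · intro x hx
    exact (hasDerivAt_gg a (hs.trans_le hx.1) (lt_of_le_of_lt hx.2 ht)).continuousAt.continuousWithinAt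
  · intro x hx
    rw [interior_Icc] at hx
    exact (hasDerivAt_gg a (hs.trans hx.1) (hx.2.trans ht)).differentiableAt.differentiableWithinAt
  · intro x hx
    rw [interior_Icc] at hx
    have h1 : -1 < x := hs.trans hx.1
    have h2 : x < 1 := hx.2.trans ht
    rw [(hasDerivAt_gg a h1 h2).deriv]
    apply div_nonneg
    · linarith [hx.2]
    · nlinarith

lemma gg_anti (a : ℝ) {s t : ℝ} (hs : -1 < s) (ht : t < 1) (has : a ≤ s) :
    AntitoneOn (gg a) (Icc s t) := by
  apply antitoneOn_of_deriv_nonpos (convex_Icc s t)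
  · intro x hx
    exact (hasDerivAt_gg a (hs.trans_le hx.1) (lt_of_le_of_lt hx.2 ht)).continuousAt.continuousWithinAt
  · intro x hx
    rw [interior_Icc] at hx
    exact (hasDerivAt_gg a (hs.trans hx.1) (hx.2.trans ht)).differentiableAt.differentiableWithinAt
  · intro x hx
    rw [interior_Icc] at hx
    have h1 : -1 < x := hs.trans hx.1
    have h2 : x < 1 := hx.2.trans ht
    rw [(hasDerivAt_gg a h1 h2).deriv]
    rw [div_nonpos_iff]
    right
    constructor
    · linarith [hx.1]
    · nlinarith

lemma csSup_image_Ioo_eq {f : ℝ → ℝ} {x y M : ℝ} (hxy : x < y)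
    (hc : ContinuousOn f (Icc x y)) (hM : IsGreatest (f '' Icc x y) M) :
    sSup (f '' Ioo x y) = M := by
  have hclos : f '' Icc x y ⊆ closure (f '' Ioo x y) := by
    have := ContinuousOn.image_closure (f := f) (s := Ioo x y)
      (by rwa [closure_Ioo hxy.ne])
    rwa [closure_Ioo hxy.ne] at this
  have hne : (f '' Ioo x y).Nonempty :=
    ⟨f ((x + y) / 2), Set.mem_image_of_mem f (by constructor <;> linarith)⟩
  apply IsLUB.csSup_eq _ hne
  constructor
  · exact fun z hz => hM.2 (Set.image_mono Ioo_subset_Icc_self hz)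
  · intro b hb
    have h1 : f '' Ioo x y ⊆ Iic b := fun z hz => hb hz
    have h2 : closure (f '' Ioo x y) ⊆ Iic b := closure_minimal h1 isClosed_Iic
    exact h2 (hclos hM.1)

lemma csInf_image_Ioo_eq {f : ℝ → ℝ} {x y m : ℝ} (hxy : x < y)
    (hc : ContinuousOn f (Icc x y)) (hm : IsLeast (f '' Icc x y) m) :
    sInf (f '' Ioo x y) = m := by
  have hclos : f '' Icc x y ⊆ closure (f '' Ioo x y) := by
    have := ContinuousOn.image_closure (f := f) (s := Ioo x y)
      (by rwa [closure_Ioo hxy.ne])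
    rwa [closure_Ioo hxy.ne] at this
  have hne : (f '' Ioo x y).Nonempty :=
    ⟨f ((x + y) / 2), Set.mem_image_of_mem f (by constructor <;> linarith)⟩
  apply IsGLB.csInf_eq _ hne
  constructor
  · exact fun z hz => hm.2 (Set.image_mono Ioo_subset_Icc_self hz)
  · intro b hb
    have h1 : f '' Ioo x y ⊆ Ici b := fun z hz => hb hz
    have h2 : closure (f '' Ioo x y) ⊆ Ici b := closure_minimal h1 isClosed_Ici
    exact h2 (hclos hm.1)

/-- the ratio function in closed form -/
noncomputable def rr (ρ₁ ρ₂ a : ℝ) : ℝ :=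
  gg a (max ρ₁ (min a ρ₂)) - min (gg a ρ₁) (gg a ρ₂)

lemma ratio_eq (ρ₁ ρ₂ : ℝ) (h1 : -1 < ρ₁) (h2 : ρ₁ < ρ₂) (h3 : ρ₂ < 1)
    {a : ℝ} (ha : -1 < a) (ha' : a < 1) :
    Msup ρ₁ ρ₂ a / minf ρ₁ ρ₂ a = Real.exp (rr ρ₁ ρ₂ a) := by
  set c := max ρ₁ (min a ρ₂) with hcdef
  have hc1 : ρ₁ ≤ c := le_max_left _ _
  have hc2 : c ≤ ρ₂ := max_le h2.le (min_le_right _ _)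
  have Gmax : ∀ ρ ∈ Icc ρ₁ ρ₂, gg a ρ ≤ gg a c := by
    intro ρ hρ
    rcases le_total a ρ₁ with h | h
    · have hceq : c = ρ₁ := by
        rw [hcdef, min_eq_left (h.trans h2.le), max_eq_left h]
      rw [hceq]
      exact gg_anti a h1 h3 h (left_mem_Icc.2 h2.le) hρ hρ.1
    · rcases le_total ρ₂ a with h' | h'
      · have hceq : c = ρ₂ := by
          rw [hcdef, min_eq_right h', max_eq_right h2.le]
        rw [hceq]
        exact gg_mono a h1 h3 h' hρ (right_mem_Icc.2 h2.le) hρ.2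
      · have hceq : c = a := by
          rw [hcdef, min_eq_left h', max_eq_right h]
        rw [hceq]
        rcases le_total ρ a with hr | hr
        · exact gg_mono a h1 ha' le_rfl ⟨hρ.1, hr⟩ (right_mem_Icc.2 h) hr
        · exact gg_anti a ha h3 le_rfl (left_mem_Icc.2 h') ⟨hr, hρ.2⟩ hr
  have Gmin : ∀ ρ ∈ Icc ρ₁ ρ₂, min (gg a ρ₁) (gg a ρ₂) ≤ gg a ρ := by
    intro ρ hρ
    rcases le_total a ρ₁ with h | h
    · exact (min_le_right _ _).trans (gg_anti a h1 h3 h hρ (right_mem_Icc.2 h2.le) hρ.2)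
    · rcases le_total ρ₂ a with h' | h'
      · exact (min_le_left _ _).trans (gg_mono a h1 h3 h' (left_mem_Icc.2 h2.le) hρ hρ.1)
      · rcases le_total ρ a with hr | hr
        · exact (min_le_left _ _).trans
            (gg_mono a h1 ha' le_rfl (left_mem_Icc.2 h) ⟨hρ.1, hr⟩ hρ.1)
        · exact (min_le_right _ _).trans
            (gg_anti a ha h3 le_rfl ⟨hr, hρ.2⟩ (right_mem_Icc.2 h') hρ.2)
  set f : ℝ → ℝ := fun ρ => Real.exp (gg a ρ₁ - gg a ρ) with hfdef
  have himg : (fun ρ => F ρ a ρ₁) '' Ioo ρ₁ ρ₂ = f '' Ioo ρ₁ ρ₂ := by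
    apply Set.image_congr
    intro ρ hρ
    exact F_eq (h1.trans hρ.1) (hρ.2.trans h3) h1 (h2.trans h3) a
  have hcont : ContinuousOn f (Icc ρ₁ ρ₂) := by
    intro x hx
    have hd := hasDerivAt_gg a (h1.trans_le hx.1) (lt_of_le_of_lt hx.2 h3)
    exact (Real.continuous_exp.continuousAt.comp
      (continuousAt_const.sub hd.continuousAt)).continuousWithinAt
  have hIsG : IsGreatest (f '' Icc ρ₁ ρ₂)
      (Real.exp (gg a ρ₁ - min (gg a ρ₁) (gg a ρ₂))) := by
    constructor
    · rcases le_total (gg a ρ₁) (gg a ρ₂) with h | h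
      · rw [min_eq_left h]; exact ⟨ρ₁, left_mem_Icc.2 h2.le, rfl⟩
      · rw [min_eq_right h]; exact ⟨ρ₂, right_mem_Icc.2 h2.le, rfl⟩
    · rintro z ⟨ρ, hρ, rfl⟩
      exact Real.exp_le_exp.2 (sub_le_sub_left (Gmin ρ hρ) _)
  have hIsL : IsLeast (f '' Icc ρ₁ ρ₂) (Real.exp (gg a ρ₁ - gg a c)) := by
    constructor
    · exact ⟨c, ⟨hc1, hc2⟩, rfl⟩
    · rintro z ⟨ρ, hρ, rfl⟩
      exact Real.exp_le_exp.2 (sub_le_sub_left (Gmax ρ hρ) _)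
  have hM : Msup ρ₁ ρ₂ a = Real.exp (gg a ρ₁ - min (gg a ρ₁) (gg a ρ₂)) := by
    rw [Msup, himg]; exact csSup_image_Ioo_eq h2 hcont hIsG
  have hm : minf ρ₁ ρ₂ a = Real.exp (gg a ρ₁ - gg a c) := by
    rw [minf, himg]; exact csInf_image_Ioo_eq h2 hcont hIsL
  rw [hM, hm, ← Real.exp_sub, rr]
  congr 1
  ring

lemma hasDerivAt_piece (b : ℝ) (hb1 : -1 < b) (hb2 : b < 1) {x : ℝ} (h1 : -1 < x) (h2 : x < 1) :
    HasDerivAt (fun a => gg a a - gg a b)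
      (Real.log (1 + x) - Real.log (1 - x) - (Real.log (1 + b) - Real.log (1 - b))) x := by
  have h1' : (1:ℝ) + x ≠ 0 := by linarith
  have h2' : (1:ℝ) - x ≠ 0 := by linarith
  have A : HasDerivAt (fun a : ℝ => (1 + a) * Real.log (1 + a)) (Real.log (1 + x) + 1) x := by
    have := ((hasDerivAt_id x).const_add 1).mul (hasDerivAt_log1p h1)
    refine this.congr_deriv ?_
    field_simp
    simp only [id_eq]
    ring
  have B : HasDerivAt (fun a : ℝ => (1 - a) * Real.log (1 - a)) (-Real.log (1 - x) - 1) x := by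
    have := ((hasDerivAt_id x).const_sub 1).mul (hasDerivAt_log1m h2)
    refine this.congr_deriv ?_
    field_simp
    simp only [id_eq]
    ring
  have C : HasDerivAt (fun a : ℝ => (1 + a) * Real.log (1 + b)) (Real.log (1 + b)) x := by
    simpa using ((hasDerivAt_id x).const_add 1).mul_const (Real.log (1 + b))
  have D : HasDerivAt (fun a : ℝ => (1 - a) * Real.log (1 - b)) (-Real.log (1 - b)) x := by
    simpa using ((hasDerivAt_id x).const_sub 1).mul_const (Real.log (1 - b))
  have hd := (A.add B).sub (C.add D)
  have : HasDerivAt (fun a : ℝ => ((1 + a) * Real.log (1 + a) + (1 - a) * Real.log (1 - a)) -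
      ((1 + a) * Real.log (1 + b) + (1 - a) * Real.log (1 - b)))
      (Real.log (1 + x) - Real.log (1 - x) - (Real.log (1 + b) - Real.log (1 - b))) x := by
    refine hd.congr_deriv ?_
    ring
  exact this

lemma strictAntiOn_piece {b s t : ℝ} (hb1 : -1 < b) (hs : -1 < s) (ht : t < b) (hb : b < 1) :
    StrictAntiOn (fun a => gg a a - gg a b) (Icc s t) := by
  apply strictAntiOn_of_deriv_neg (convex_Icc s t)
  · intro x hx
    have h1 : -1 < x := hs.trans_le hx.1
    have h2 : x < 1 := by linarith [hx.2]
    exact (hasDerivAt_piece b hb1 hb h1 h2).continuousAt.continuousWithinAt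
  · intro x hx
    rw [interior_Icc] at hx
    have h1 : -1 < x := hs.trans hx.1
    have h2 : x < 1 := by linarith [hx.2]
    rw [(hasDerivAt_piece b hb1 hb h1 h2).deriv]
    have l1 : Real.log (1 + x) < Real.log (1 + b) := Real.log_lt_log (by linarith) (by linarith [hx.2])
    have l2 : Real.log (1 - b) < Real.log (1 - x) := Real.log_lt_log (by linarith) (by linarith [hx.2])
    linarith

lemma strictMonoOn_piece {b s t : ℝ} (hb : -1 < b) (hb2 : b < 1) (hbs : b < s) (ht : t < 1) :
    StrictMonoOn (fun a => gg a a - gg a b) (Icc s t) := by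
  apply strictMonoOn_of_deriv_pos (convex_Icc s t)
  · intro x hx
    have h1 : -1 < x := by linarith [hx.1]
    have h2 : x < 1 := lt_of_le_of_lt hx.2 ht
    exact (hasDerivAt_piece b hb hb2 h1 h2).continuousAt.continuousWithinAt
  · intro x hx
    rw [interior_Icc] at hx
    have h1 : -1 < x := by linarith [hx.1]
    have h2 : x < 1 := hx.2.trans ht
    rw [(hasDerivAt_piece b hb hb2 h1 h2).deriv]
    have l1 : Real.log (1 + b) < Real.log (1 + x) := Real.log_lt_log (by linarith) (by linarith [hx.1])
    have l2 : Real.log (1 - x) < Real.log (1 - b) := Real.log_lt_log (by linarith) (by linarith [hx.1])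
    linarith

end RatioAux

open RatioAux

theorem ratio_min_at_a₀ (ρ₁ ρ₂ a₀ : ℝ) (h1 : -1 < ρ₁) (h2 : ρ₁ < ρ₂) (h3 : ρ₂ < 1)
    (ha₀ : ρ₁ < a₀) (ha₀' : a₀ < ρ₂) (hroot : F ρ₂ a₀ ρ₁ = 1) :
    StrictAntiOn (fun a => Msup ρ₁ ρ₂ a / minf ρ₁ ρ₂ a) (Set.Ioo (-1 : ℝ) a₀) ∧
    StrictMonoOn (fun a => Msup ρ₁ ρ₂ a / minf ρ₁ ρ₂ a) (Set.Ioo a₀ 1) ∧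
    ∀ a ∈ Set.Ioo (-1 : ℝ) 1, a ≠ a₀ →
      Msup ρ₁ ρ₂ a₀ / minf ρ₁ ρ₂ a₀ < Msup ρ₁ ρ₂ a / minf ρ₁ ρ₂ a := by
  have hδ0 : gg a₀ ρ₁ - gg a₀ ρ₂ = 0 := by
    have := F_eq (h1.trans h2) h3 h1 (h2.trans h3) a₀
    rw [this] at hroot
    have := congrArg Real.log hroot
    rwa [Real.log_exp, Real.log_one] at this
  have hδanti : ∀ x y : ℝ, x < y → gg y ρ₁ - gg y ρ₂ < gg x ρ₁ - gg x ρ₂ := by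
    intro x y hxy
    have l1 : Real.log (1 + ρ₁) < Real.log (1 + ρ₂) := Real.log_lt_log (by linarith) (by linarith)
    have l2 : Real.log (1 - ρ₂) < Real.log (1 - ρ₁) := Real.log_lt_log (by linarith) (by linarith)
    simp only [gg]
    nlinarith [mul_pos (sub_pos.2 hxy)
      (by linarith : (0:ℝ) < (Real.log (1 + ρ₂) - Real.log (1 + ρ₁)) +
        (Real.log (1 - ρ₁) - Real.log (1 - ρ₂)))]
  have hmin_le : ∀ {b : ℝ}, b ≤ a₀ → min (gg b ρ₁) (gg b ρ₂) = gg b ρ₂ := by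
    intro b hb
    apply min_eq_right
    rcases eq_or_lt_of_le hb with rfl | h
    · linarith
    · linarith [hδanti b a₀ h]
  have hmin_ge : ∀ {b : ℝ}, a₀ ≤ b → min (gg b ρ₁) (gg b ρ₂) = gg b ρ₁ := by
    intro b hb
    apply min_eq_left
    rcases eq_or_lt_of_le hb with h | h
    · rw [← h]; linarith
    · linarith [hδanti a₀ b h]
  -- piecewise formulas for rr
  have E1 : ∀ b ∈ Set.Ioc (-1 : ℝ) ρ₁, rr ρ₁ ρ₂ b = gg b ρ₁ - gg b ρ₂ := by
    intro b hb
    rw [rr, min_eq_left (hb.2.trans h2.le), max_eq_left hb.2, hmin_le (hb.2.trans ha₀.le)]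
  have E2 : ∀ b ∈ Set.Icc ρ₁ a₀, rr ρ₁ ρ₂ b = gg b b - gg b ρ₂ := by
    intro b hb
    rw [rr, min_eq_left (hb.2.trans ha₀'.le), max_eq_right hb.1, hmin_le hb.2]
  have E3 : ∀ b ∈ Set.Icc a₀ ρ₂, rr ρ₁ ρ₂ b = gg b b - gg b ρ₁ := by
    intro b hb
    rw [rr, min_eq_left hb.2, max_eq_right (ha₀.le.trans hb.1), hmin_ge hb.1]
  have E4 : ∀ b ∈ Set.Ico ρ₂ (1 : ℝ), rr ρ₁ ρ₂ b = gg b ρ₂ - gg b ρ₁ := by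
    intro b hb
    rw [rr, min_eq_right hb.1, max_eq_right h2.le, hmin_ge (ha₀'.le.trans hb.1)]
  -- strict monotonicity on pieces
  have A1 : StrictAntiOn (rr ρ₁ ρ₂) (Set.Ioc (-1 : ℝ) ρ₁) := by
    intro x hx y hy hxy
    rw [E1 x hx, E1 y hy]
    exact hδanti x y hxy
  have A2 : StrictAntiOn (rr ρ₁ ρ₂) (Set.Icc ρ₁ a₀) := by
    intro x hx y hy hxy
    rw [E2 x hx, E2 y hy]
    exact strictAntiOn_piece (by linarith) h1 ha₀' h3 hx hy hxy
  have B1 : StrictMonoOn (rr ρ₁ ρ₂) (Set.Icc a₀ ρ₂) := by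
    intro x hx y hy hxy
    rw [E3 x hx, E3 y hy]
    exact strictMonoOn_piece h1 (by linarith) ha₀ h3 hx hy hxy
  have B2 : StrictMonoOn (rr ρ₁ ρ₂) (Set.Ico ρ₂ (1 : ℝ)) := by
    intro x hx y hy hxy
    rw [E4 x hx, E4 y hy]
    linarith [hδanti x y hxy]
  -- glue
  have hA : StrictAntiOn (rr ρ₁ ρ₂) (Set.Ioc (-1 : ℝ) a₀) := by
    have := A1.union A2 ⟨⟨h1, le_rfl⟩, fun x hx => hx.2⟩ ⟨⟨le_rfl, ha₀.le⟩, fun x hx => hx.1⟩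
    rwa [Set.Ioc_union_Icc_eq_Ioc h1 ha₀.le] at this
  have hB : StrictMonoOn (rr ρ₁ ρ₂) (Set.Ico a₀ (1 : ℝ)) := by
    have := B1.union B2 ⟨⟨ha₀'.le, le_rfl⟩, fun x hx => hx.2⟩ ⟨⟨le_rfl, h3⟩, fun x hx => hx.1⟩
    rwa [Set.Icc_union_Ico_eq_Ico ha₀'.le h3] at this
  have hkey : ∀ b ∈ Set.Ioo (-1 : ℝ) 1,
      Msup ρ₁ ρ₂ b / minf ρ₁ ρ₂ b = Real.exp (rr ρ₁ ρ₂ b) :=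
    fun b hb => ratio_eq ρ₁ ρ₂ h1 h2 h3 hb.1 hb.2
  have ha₀1 : a₀ ∈ Set.Ioo (-1 : ℝ) 1 := ⟨h1.trans ha₀, ha₀'.trans h3⟩
  refine ⟨?_, ?_, ?_⟩
  · intro x hx y hy hxy
    have hx1 : x ∈ Set.Ioo (-1 : ℝ) 1 := ⟨hx.1, hx.2.trans (ha₀'.trans h3)⟩
    have hy1 : y ∈ Set.Ioo (-1 : ℝ) 1 := ⟨hy.1, hy.2.trans (ha₀'.trans h3)⟩
    simp only []
    rw [hkey x hx1, hkey y hy1]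
    exact Real.exp_lt_exp.2 (hA ⟨hx.1, hx.2.le⟩ ⟨hy.1, hy.2.le⟩ hxy)
  · intro x hx y hy hxy
    have hx1 : x ∈ Set.Ioo (-1 : ℝ) 1 := ⟨(h1.trans ha₀).trans hx.1, hx.2⟩
    have hy1 : y ∈ Set.Ioo (-1 : ℝ) 1 := ⟨(h1.trans ha₀).trans hy.1, hy.2⟩
    simp only []
    rw [hkey x hx1, hkey y hy1]
    exact Real.exp_lt_exp.2 (hB ⟨hx.1.le, hx.2⟩ ⟨hy.1.le, hy.2⟩ hxy)
  · intro b hb hne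
    rw [hkey b hb, hkey a₀ ha₀1]
    rcases hne.lt_or_gt with h | h
    · exact Real.exp_lt_exp.2 (hA ⟨hb.1, h.le⟩ ⟨h1.trans ha₀, le_rfl⟩ h)
    · exact Real.exp_lt_exp.2 (hB ⟨le_rfl, ha₀'.trans h3⟩ ⟨h.le, hb.2⟩ h)
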